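/- arXiv:2503.14885 — 3 statements merged into one kernel-verified Lean document; each statement's English description precedes it below -/
import Mathlib

section
/- Let 1 < d₁ < 2 and let d₁' = d₁/(d₁−1) be its conjugate exponent. Consider the integral operator T f(x) = ∫₁^∞ K(x,y) f(y) y^{d₁−1} dy with kernel K(x,y) = x^{1−d₁} y^{−1} for 1 ≤ x ≤ y and K(x,y) = x^{−d₁} for x > y ≥ 1. Then for every p with 1 < p < d₁' there exists a constant C > 0 such that ‖Tf‖_{L^p([1,∞), μ_{d₁})} ≤ C ‖f‖_{L^p([1,∞), μ_{d₁})} for all f ∈ L^p([1,∞), μ_{d₁}). -/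
open MeasureTheory Set
open scoped ENNReal NNReal

/-- The measure on `[1,∞)` with density `r ^ (n-1)` with respect to Lebesgue measure. -/
noncomputable def mu (n : ℝ) : Measure ℝ :=
  (volume.restrict (Ici (1 : ℝ))).withDensity fun r => ENNReal.ofReal (r ^ (n - 1))

lemma lint_Ioi_rpow {c : ℝ} (hc : c < -1) {x : ℝ} (hx : 0 < x) :
    ∫⁻ y in Ioi x, ENNReal.ofReal (y ^ c) = ENNReal.ofReal (x ^ (c + 1) / (-(c + 1))) := by
  rw [← ofReal_integral_eq_lintegral_ofReal (integrableOn_Ioi_rpow_of_lt hc hx)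
      ((ae_restrict_iff' measurableSet_Ioi).2 (Filter.Eventually.of_forall fun y hy =>
        Real.rpow_nonneg (le_of_lt (hx.trans hy)) c))]
  rw [integral_Ioi_rpow_of_lt hc hx]
  congr 1; rw [neg_div, ← div_neg]

lemma lint_Ioc_rpow {c : ℝ} (hc : c ≠ -1) {x : ℝ} (hx : 1 ≤ x) :
    ∫⁻ y in Ioc 1 x, ENNReal.ofReal (y ^ c) = ENNReal.ofReal ((x ^ (c + 1) - 1) / (c + 1)) := by
  have hint : IntegrableOn (fun y : ℝ => y ^ c) (Ioc 1 x) := by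
    apply (ContinuousOn.integrableOn_compact isCompact_Icc
      (fun y hy => (Real.continuousAt_rpow_const y c
        (Or.inl (by have := hy.1; positivity))).continuousWithinAt)).mono_set Ioc_subset_Icc_self
  rw [← ofReal_integral_eq_lintegral_ofReal hint
      ((ae_restrict_iff' measurableSet_Ioc).2 (Filter.Eventually.of_forall fun y hy =>
        Real.rpow_nonneg (by linarith [hy.1]) c))]
  rw [← intervalIntegral.integral_of_le hx,
    integral_rpow (Or.inr ⟨hc, by rw [uIcc_of_le hx]; intro h; linarith [h.1]⟩)]
  norm_num

noncomputable def Kk (d₁ x y : ℝ) : ENNReal :=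
  ENNReal.ofReal (if x ≤ y then x ^ (1 - d₁) * y ^ (-1 : ℝ) else x ^ (-d₁))

lemma schurA {d₁ a x : ℝ} (hd₁ : 1 < d₁) (ha1 : d₁ - 1 < a) (ha2 : a < d₁) (hx : 1 ≤ x) :
    ∫⁻ y in Ici 1, Kk d₁ x y * ENNReal.ofReal (y ^ (d₁ - 1 - a)) ≤
      ENNReal.ofReal (1 / (d₁ - a) + 1 / (a + 1 - d₁)) * ENNReal.ofReal (x ^ (-a)) := by
  have hx0 : (0:ℝ) < x := lt_of_lt_of_le one_pos hx
  have hda : (0:ℝ) < d₁ - a := by linarith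
  have had : (0:ℝ) < a + 1 - d₁ := by linarith
  rw [← Ico_union_Ici_eq_Ici hx, lintegral_union measurableSet_Ici
    (Set.disjoint_left.2 fun y hy hy' => absurd hy' (not_le.2 hy.2))]
  have T1 : ∫⁻ y in Ico 1 x, Kk d₁ x y * ENNReal.ofReal (y ^ (d₁ - 1 - a)) ≤
      ENNReal.ofReal (1 / (d₁ - a)) * ENNReal.ofReal (x ^ (-a)) := by
    rw [setLIntegral_congr_fun_ae measurableSet_Ico
      (Filter.Eventually.of_forall (fun y hy => by
        show Kk d₁ x y * _ = ENNReal.ofReal (x ^ (-d₁)) * ENNReal.ofReal (y ^ (d₁ - 1 - a))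
        rw [Kk, if_neg (not_le.2 hy.2)])),
      setLIntegral_congr (Ico_ae_eq_Ioc)]
    rw [lintegral_const_mul' _ _ ENNReal.ofReal_ne_top,
      lint_Ioc_rpow (c := d₁ - 1 - a) (by intro h; apply absurd ha2; rw [not_lt]; linarith) hx]
    rw [← ENNReal.ofReal_mul (Real.rpow_nonneg hx0.le _),
      ← ENNReal.ofReal_mul (by positivity)]
    apply ENNReal.ofReal_le_ofReal
    have h1 : d₁ - 1 - a + 1 = d₁ - a := by ring
    rw [h1]
    calc x ^ (-d₁) * ((x ^ (d₁ - a) - 1) / (d₁ - a))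
        ≤ x ^ (-d₁) * (x ^ (d₁ - a) / (d₁ - a)) := by
          apply mul_le_mul_of_nonneg_left _ (Real.rpow_nonneg hx0.le _)
          exact (div_le_div_iff_of_pos_right hda).2 (by linarith)
      _ = 1 / (d₁ - a) * x ^ (-a) := by
          rw [div_eq_mul_inv, ← mul_assoc, ← Real.rpow_add hx0]
          ring_nf
  have T2 : ∫⁻ y in Ici x, Kk d₁ x y * ENNReal.ofReal (y ^ (d₁ - 1 - a)) ≤
      ENNReal.ofReal (1 / (a + 1 - d₁)) * ENNReal.ofReal (x ^ (-a)) := by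
    rw [setLIntegral_congr (Ioi_ae_eq_Ici).symm]
    rw [setLIntegral_congr_fun_ae measurableSet_Ioi
      (Filter.Eventually.of_forall (fun y (hy : x < y) => by
        show Kk d₁ x y * _ = ENNReal.ofReal (x ^ (1 - d₁)) * ENNReal.ofReal (y ^ (d₁ - 2 - a))
        have hy0 : (0:ℝ) < y := hx0.trans hy
        rw [Kk, if_pos (le_of_lt hy), ENNReal.ofReal_mul (by positivity),
          mul_assoc, ← ENNReal.ofReal_mul (by positivity), ← Real.rpow_add hy0]
        ring_nf))]
    rw [lintegral_const_mul' _ _ ENNReal.ofReal_ne_top,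
      lint_Ioi_rpow (c := d₁ - 2 - a) (by linarith) hx0]
    rw [← ENNReal.ofReal_mul (Real.rpow_nonneg hx0.le _),
      ← ENNReal.ofReal_mul (by positivity)]
    apply ENNReal.ofReal_le_ofReal
    have h1 : d₁ - 2 - a + 1 = d₁ - 1 - a := by ring
    rw [h1]
    have h3 : x ^ (1 - d₁) * (x ^ (d₁ - 1 - a) / (-(d₁ - 1 - a))) =
        1 / (a + 1 - d₁) * x ^ (-a) := by
      rw [div_eq_mul_inv, ← mul_assoc, ← Real.rpow_add hx0]
      have h4 : -(d₁ - 1 - a) = a + 1 - d₁ := by ring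
      have h5 : 1 - d₁ + (d₁ - 1 - a) = -a := by ring
      rw [h4, h5]; ring
    exact h3.le
  calc _ ≤ (ENNReal.ofReal (1 / (d₁ - a)) * ENNReal.ofReal (x ^ (-a))) +
      (ENNReal.ofReal (1 / (a + 1 - d₁)) * ENNReal.ofReal (x ^ (-a))) := add_le_add T1 T2
    _ = _ := by
      rw [← add_mul, ← ENNReal.ofReal_add (by positivity) (by positivity)]

lemma schurB {d₁ b y : ℝ} (hb0 : 0 < b) (hb1 : b < 1) (hy : 1 ≤ y) :
    ∫⁻ x in Ici 1, Kk d₁ x y * ENNReal.ofReal (x ^ (d₁ - 1 - b)) ≤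
      ENNReal.ofReal (1 / (1 - b) + 1 / b) * ENNReal.ofReal (y ^ (-b)) := by
  have hy0 : (0:ℝ) < y := lt_of_lt_of_le one_pos hy
  have h1b : (0:ℝ) < 1 - b := by linarith
  rw [← Icc_union_Ioi_eq_Ici hy, lintegral_union measurableSet_Ioi
    (Set.disjoint_left.2 fun x hx hx' => absurd hx.2 (not_le.2 hx'))]
  have T1 : ∫⁻ x in Icc 1 y, Kk d₁ x y * ENNReal.ofReal (x ^ (d₁ - 1 - b)) ≤
      ENNReal.ofReal (1 / (1 - b)) * ENNReal.ofReal (y ^ (-b)) := by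
    rw [setLIntegral_congr_fun_ae measurableSet_Icc
      (Filter.Eventually.of_forall (fun x hx => by
        show Kk d₁ x y * _ = ENNReal.ofReal (y ^ (-1:ℝ)) * ENNReal.ofReal (x ^ (-b))
        have hx0 : (0:ℝ) < x := lt_of_lt_of_le one_pos hx.1
        rw [Kk, if_pos hx.2, mul_comm (x ^ (1 - d₁)), ENNReal.ofReal_mul (by positivity),
          mul_assoc, ← ENNReal.ofReal_mul (by positivity), ← Real.rpow_add hx0]
        ring_nf)),
      setLIntegral_congr (Ioc_ae_eq_Icc).symm]
    rw [lintegral_const_mul' _ _ ENNReal.ofReal_ne_top,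
      lint_Ioc_rpow (c := -b) (by intro h; linarith [neg_injective h]) hy]
    rw [← ENNReal.ofReal_mul (Real.rpow_nonneg hy0.le _),
      ← ENNReal.ofReal_mul (by positivity)]
    apply ENNReal.ofReal_le_ofReal
    have h1 : -b + 1 = 1 - b := by ring
    rw [h1]
    calc y ^ (-1:ℝ) * ((y ^ (1 - b) - 1) / (1 - b))
        ≤ y ^ (-1:ℝ) * (y ^ (1 - b) / (1 - b)) := by
          apply mul_le_mul_of_nonneg_left _ (Real.rpow_nonneg hy0.le _)
          exact (div_le_div_iff_of_pos_right h1b).2 (by linarith)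
      _ = 1 / (1 - b) * y ^ (-b) := by
          rw [div_eq_mul_inv, ← mul_assoc, ← Real.rpow_add hy0]
          ring_nf
  have T2 : ∫⁻ x in Ioi y, Kk d₁ x y * ENNReal.ofReal (x ^ (d₁ - 1 - b)) ≤
      ENNReal.ofReal (1 / b) * ENNReal.ofReal (y ^ (-b)) := by
    rw [setLIntegral_congr_fun_ae measurableSet_Ioi
      (Filter.Eventually.of_forall (fun x (hx : y < x) => by
        show Kk d₁ x y * _ = ENNReal.ofReal (x ^ (-1 - b))
        have hx0 : (0:ℝ) < x := hy0.trans hx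
        rw [Kk, if_neg (not_le.2 hx), ← ENNReal.ofReal_mul (by positivity),
          ← Real.rpow_add hx0]
        ring_nf))]
    rw [lint_Ioi_rpow (c := -1 - b) (by linarith) hy0]
    rw [← ENNReal.ofReal_mul (by positivity)]
    apply ENNReal.ofReal_le_ofReal
    have h1 : -1 - b + 1 = -b := by ring
    rw [h1, neg_neg, div_eq_mul_inv, one_div, mul_comm]
  calc _ ≤ (ENNReal.ofReal (1 / (1 - b)) * ENNReal.ofReal (y ^ (-b))) +
      (ENNReal.ofReal (1 / b) * ENNReal.ofReal (y ^ (-b))) := add_le_add T1 T2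
    _ = _ := by
      rw [← add_mul, ← ENNReal.ofReal_add (by positivity) (by positivity)]

lemma meas_orp (c : ℝ) : Measurable fun y : ℝ => ENNReal.ofReal (y ^ c) := by
  measurability

lemma measurable_Kk (d₁ : ℝ) : Measurable (fun z : ℝ × ℝ => Kk d₁ z.1 z.2) := by
  unfold Kk
  apply Measurable.ennreal_ofReal
  exact Measurable.ite (measurableSet_le measurable_fst measurable_snd)
    (by measurability) (by measurability)

lemma measurable_Kk_right (d₁ x : ℝ) : Measurable (fun y : ℝ => Kk d₁ x y) :=
  (measurable_Kk d₁).comp (measurable_const.prodMk measurable_id)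

section core
variable {d₁ p p' t : ℝ}

lemma core (hd₁ : 1 < d₁) (hpq : p'.HolderConjugate p) (ht : 0 < t)
    (ha1 : d₁ - 1 < t * p') (ha2 : t * p' < d₁) (hb0 : 0 < t * p) (hb1 : t * p < 1)
    (f : ℝ → ℝ) (hf : Measurable f) :
    ∫⁻ x, (‖∫ y in Ici (1:ℝ),
        (if x ≤ y then x ^ (1 - d₁) * y ^ (-1 : ℝ) else x ^ (-d₁)) * f y * y ^ (d₁ - 1)‖₊
        : ℝ≥0∞) ^ p ∂(mu d₁) ≤
      ENNReal.ofReal (1/(d₁ - t*p') + 1/(t*p' + 1 - d₁)) ^ (p / p') *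
        ENNReal.ofReal (1/(1 - t*p) + 1/(t*p)) *
        ∫⁻ x, (‖f x‖₊ : ℝ≥0∞) ^ p ∂(mu d₁) := by
  have hp1 : 1 < p := hpq.symm.lt
  have hp'1 : 1 < p' := hpq.lt
  have ppos : 0 < p := by linarith
  have p'pos : 0 < p' := by linarith
  have hsum : 1/p' + 1/p = 1 := by
    rw [one_div, one_div]; exact hpq.inv_add_inv_eq_one
  set ν : Measure ℝ := volume.restrict (Ici (1:ℝ)) with hν
  set ρ : ℝ → ℝ≥0∞ := fun x => ENNReal.ofReal (x ^ (d₁ - 1)) with hρ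
  have hρm : Measurable ρ := meas_orp _
  have hmu : mu d₁ = ν.withDensity ρ := rfl
  set g : ℝ → ℝ≥0∞ := fun y => (‖f y‖₊ : ℝ≥0∞) with hg
  have hgm : Measurable g := hf.nnnorm.coe_nnreal_ennreal
  set A : ℝ → ℝ → ℝ≥0∞ := fun x y => Kk d₁ x y * ρ y with hA
  set C₁ : ℝ≥0∞ := ENNReal.ofReal (1/(d₁ - t*p') + 1/(t*p' + 1 - d₁)) with hC₁
  set C₂ : ℝ≥0∞ := ENNReal.ofReal (1/(1 - t*p) + 1/(t*p)) with hC₂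
  set I₂ : ℝ → ℝ≥0∞ := fun x => ∫⁻ y, A x y * ENNReal.ofReal (y ^ (t*p)) * g y ^ p ∂ν
    with hI₂
  -- Step 1: pointwise Hölder bound
  have step1 : ∀ x, 1 ≤ x → (‖∫ y in Ici (1:ℝ),
      (if x ≤ y then x ^ (1 - d₁) * y ^ (-1 : ℝ) else x ^ (-d₁)) * f y * y ^ (d₁ - 1)‖₊
      : ℝ≥0∞) ≤ (C₁ * ENNReal.ofReal (x ^ (-(t*p')))) ^ (1/p') * (I₂ x) ^ (1/p) := by
    intro x hx
    have hx0 : (0:ℝ) < x := lt_of_lt_of_le one_pos hx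
    have s0 : (‖∫ y in Ici (1:ℝ),
        (if x ≤ y then x ^ (1 - d₁) * y ^ (-1 : ℝ) else x ^ (-d₁)) * f y * y ^ (d₁ - 1)‖₊
        : ℝ≥0∞) ≤ ∫⁻ y, A x y * g y ∂ν := by
      refine le_trans (enorm_integral_le_lintegral_enorm _) ?_
      refine le_of_eq (lintegral_congr_ae ?_)
      filter_upwards [ae_restrict_mem measurableSet_Ici] with y hy
      have hy0 : (0:ℝ) < y := lt_of_lt_of_le one_pos hy
      have hk : 0 ≤ (if x ≤ y then x ^ (1 - d₁) * y ^ (-1 : ℝ) else x ^ (-d₁)) := by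
        split_ifs <;> positivity
      rw [enorm_mul, enorm_mul,
        Real.enorm_eq_ofReal hk, Real.enorm_eq_ofReal (by positivity : (0:ℝ) ≤ y ^ (d₁-1))]
      show Kk d₁ x y * g y * ρ y = A x y * g y
      rw [hA]; ring
    set F₁ : ℝ → ℝ≥0∞ := fun y => (A x y) ^ (1/p') * ENNReal.ofReal (y ^ (-t)) with hF₁
    set F₂ : ℝ → ℝ≥0∞ := fun y => (A x y) ^ (1/p) * ENNReal.ofReal (y ^ t) * g y with hF₂
    have hAm : Measurable (A x) := (measurable_Kk_right d₁ x).mul (meas_orp _)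
    have hF₁m : Measurable F₁ := (hAm.pow_const _).mul (meas_orp _)
    have hF₂m : Measurable F₂ := ((hAm.pow_const _).mul (meas_orp _)).mul hgm
    have sFG : ∫⁻ y, A x y * g y ∂ν = ∫⁻ y, (F₁ * F₂) y ∂ν := by
      refine lintegral_congr_ae ?_
      filter_upwards [ae_restrict_mem measurableSet_Ici] with y hy
      have hy0 : (0:ℝ) < y := lt_of_lt_of_le one_pos hy
      show A x y * g y = F₁ y * F₂ y
      rw [hF₁, hF₂]
      have e : (A x y) ^ (1/p') * ENNReal.ofReal (y ^ (-t)) *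
          ((A x y) ^ (1/p) * ENNReal.ofReal (y ^ t) * g y) =
          ((A x y) ^ (1/p') * (A x y) ^ (1/p)) *
            (ENNReal.ofReal (y ^ (-t)) * ENNReal.ofReal (y ^ t)) * g y := by ring
      rw [e, ← ENNReal.rpow_add_of_nonneg _ _ (by positivity) (by positivity),
        hsum, ENNReal.rpow_one,
        ← ENNReal.ofReal_mul (by positivity), ← Real.rpow_add hy0, neg_add_cancel,
        Real.rpow_zero, ENNReal.ofReal_one, mul_one]
    have holder := ENNReal.lintegral_mul_le_Lp_mul_Lq ν hpq hF₁m.aemeasurable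
      hF₂m.aemeasurable
    have e1 : ∫⁻ y, F₁ y ^ p' ∂ν =
        ∫⁻ y, Kk d₁ x y * ENNReal.ofReal (y ^ (d₁ - 1 - t*p')) ∂ν := by
      refine lintegral_congr_ae ?_
      filter_upwards [ae_restrict_mem measurableSet_Ici] with y hy
      have hy0 : (0:ℝ) < y := lt_of_lt_of_le one_pos hy
      rw [hF₁, ENNReal.mul_rpow_of_nonneg _ _ p'pos.le, ← ENNReal.rpow_mul,
        one_div, inv_mul_cancel₀ (ne_of_gt p'pos), ENNReal.rpow_one,
        ENNReal.ofReal_rpow_of_pos (by positivity), ← Real.rpow_mul hy0.le, hA]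
      show Kk d₁ x y * ρ y * ENNReal.ofReal (y ^ (-t * p')) = _
      rw [hρ, mul_assoc, ← ENNReal.ofReal_mul (by positivity), ← Real.rpow_add hy0,
        show d₁ - 1 + -t * p' = d₁ - 1 - t * p' from by ring]
    have b1 : (∫⁻ y, F₁ y ^ p' ∂ν) ≤ C₁ * ENNReal.ofReal (x ^ (-(t*p'))) := by
      rw [e1, hC₁]
      exact schurA hd₁ ha1 ha2 hx
    have e2 : ∫⁻ y, F₂ y ^ p ∂ν = I₂ x := by
      rw [hI₂]
      refine lintegral_congr_ae ?_
      filter_upwards [ae_restrict_mem measurableSet_Ici] with y hy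
      have hy0 : (0:ℝ) < y := lt_of_lt_of_le one_pos hy
      rw [hF₂, ENNReal.mul_rpow_of_nonneg _ _ ppos.le, ENNReal.mul_rpow_of_nonneg _ _ ppos.le,
        ← ENNReal.rpow_mul, one_div, inv_mul_cancel₀ (ne_of_gt ppos), ENNReal.rpow_one,
        ENNReal.ofReal_rpow_of_pos (by positivity), ← Real.rpow_mul hy0.le]
    calc (‖∫ y in Ici (1:ℝ),
        (if x ≤ y then x ^ (1 - d₁) * y ^ (-1 : ℝ) else x ^ (-d₁)) * f y * y ^ (d₁ - 1)‖₊
        : ℝ≥0∞) ≤ ∫⁻ y, A x y * g y ∂ν := s0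
      _ = ∫⁻ y, (F₁ * F₂) y ∂ν := sFG
      _ ≤ (∫⁻ y, F₁ y ^ p' ∂ν) ^ (1/p') * (∫⁻ y, F₂ y ^ p ∂ν) ^ (1/p) := holder
      _ ≤ (C₁ * ENNReal.ofReal (x ^ (-(t*p')))) ^ (1/p') * (I₂ x) ^ (1/p) := by
          rw [e2]
          exact mul_le_mul_left (ENNReal.rpow_le_rpow b1 (by positivity)) _
  -- Step 2: raise to the p-th power
  have step2 : ∀ x, 1 ≤ x → (‖∫ y in Ici (1:ℝ),
      (if x ≤ y then x ^ (1 - d₁) * y ^ (-1 : ℝ) else x ^ (-d₁)) * f y * y ^ (d₁ - 1)‖₊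
      : ℝ≥0∞) ^ p ≤ C₁ ^ (p/p') * (ENNReal.ofReal (x ^ (-(t*p))) * I₂ x) := by
    intro x hx
    have hx0 : (0:ℝ) < x := lt_of_lt_of_le one_pos hx
    refine le_trans (ENNReal.rpow_le_rpow (step1 x hx) ppos.le) (le_of_eq ?_)
    rw [ENNReal.mul_rpow_of_nonneg _ _ ppos.le, ← ENNReal.rpow_mul, ← ENNReal.rpow_mul,
      one_div, one_div, inv_mul_cancel₀ (ne_of_gt ppos), ENNReal.rpow_one,
      ENNReal.mul_rpow_of_nonneg _ _ (by positivity : (0:ℝ) ≤ p'⁻¹ * p),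
      ENNReal.ofReal_rpow_of_pos (Real.rpow_pos_of_pos hx0 _),
      ← Real.rpow_mul hx0.le,
      show -(t*p') * (p'⁻¹ * p) = -(t*p) from by
        have hne : p' ≠ 0 := ne_of_gt p'pos
        field_simp,
      show p'⁻¹ * p = p / p' from by rw [div_eq_mul_inv]; ring, mul_assoc]
  -- Step 3: integrate
  have hρtop : ∀ᵐ x ∂ν, ρ x < ⊤ := Filter.Eventually.of_forall fun x => ENNReal.ofReal_lt_top
  have haemu : ∀ᵐ x ∂(mu d₁), 1 ≤ x := by
    rw [hmu]
    exact Filter.Eventually.filter_mono (withDensity_absolutelyContinuous ν ρ).ae_le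
      (ae_restrict_mem measurableSet_Ici)
  have hcne : ∀ y : ℝ, (ρ y * ENNReal.ofReal (y ^ (t*p)) * g y ^ p) ≠ ⊤ := fun y =>
    ENNReal.mul_ne_top (ENNReal.mul_ne_top ENNReal.ofReal_ne_top ENNReal.ofReal_ne_top)
      (ENNReal.rpow_ne_top_of_nonneg ppos.le ENNReal.coe_ne_top)
  have hswapm : AEMeasurable (Function.uncurry fun x y =>
      (Kk d₁ x y * (ρ x * ENNReal.ofReal (x ^ (-(t*p))))) *
        (ρ y * ENNReal.ofReal (y ^ (t*p)) * g y ^ p)) (ν.prod ν) := by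
    apply Measurable.aemeasurable
    exact ((measurable_Kk d₁).mul
        ((hρm.comp measurable_fst).mul ((meas_orp _).comp measurable_fst))).mul
      (((hρm.comp measurable_snd).mul ((meas_orp _).comp measurable_snd)).mul
        ((hgm.comp measurable_snd).pow_const _))
  calc ∫⁻ x, (‖∫ y in Ici (1:ℝ),
        (if x ≤ y then x ^ (1 - d₁) * y ^ (-1 : ℝ) else x ^ (-d₁)) * f y * y ^ (d₁ - 1)‖₊
        : ℝ≥0∞) ^ p ∂(mu d₁)
      ≤ ∫⁻ x, C₁ ^ (p/p') * (ENNReal.ofReal (x ^ (-(t*p))) * I₂ x) ∂(mu d₁) := by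
        refine lintegral_mono_ae ?_
        filter_upwards [haemu] with x hx
        exact step2 x hx
    _ = C₁ ^ (p/p') * ∫⁻ x, ENNReal.ofReal (x ^ (-(t*p))) * I₂ x ∂(mu d₁) :=
        lintegral_const_mul' _ _
          (ENNReal.rpow_ne_top_of_nonneg (by positivity) ENNReal.ofReal_ne_top)
    _ = C₁ ^ (p/p') * ∫⁻ x, ρ x * (ENNReal.ofReal (x ^ (-(t*p))) * I₂ x) ∂ν := by
        rw [hmu, lintegral_withDensity_eq_lintegral_mul_non_measurable ν hρm hρtop]
        simp only [Pi.mul_apply]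
    _ = C₁ ^ (p/p') * ∫⁻ x, ∫⁻ y,
          (Kk d₁ x y * (ρ x * ENNReal.ofReal (x ^ (-(t*p))))) *
            (ρ y * ENNReal.ofReal (y ^ (t*p)) * g y ^ p) ∂ν ∂ν := by
        congr 1
        refine lintegral_congr fun x => ?_
        rw [hI₂, ← mul_assoc, ← lintegral_const_mul' _ _
          (ENNReal.mul_ne_top ENNReal.ofReal_ne_top ENNReal.ofReal_ne_top)]
        refine lintegral_congr fun y => ?_
        rw [hA]; ring
    _ = C₁ ^ (p/p') * ∫⁻ y, ∫⁻ x,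
          (Kk d₁ x y * (ρ x * ENNReal.ofReal (x ^ (-(t*p))))) *
            (ρ y * ENNReal.ofReal (y ^ (t*p)) * g y ^ p) ∂ν ∂ν := by
        rw [lintegral_lintegral_swap hswapm]
    _ ≤ C₁ ^ (p/p') * ∫⁻ y, C₂ * (ρ y * g y ^ p) ∂ν := by
        refine mul_le_mul_right (lintegral_mono_ae ?_) _
        filter_upwards [ae_restrict_mem measurableSet_Ici] with y hy
        have hy0 : (0:ℝ) < y := lt_of_lt_of_le one_pos hy
        calc ∫⁻ x, (Kk d₁ x y * (ρ x * ENNReal.ofReal (x ^ (-(t*p))))) *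
              (ρ y * ENNReal.ofReal (y ^ (t*p)) * g y ^ p) ∂ν
            = (ρ y * ENNReal.ofReal (y ^ (t*p)) * g y ^ p) *
                ∫⁻ x, Kk d₁ x y * (ρ x * ENNReal.ofReal (x ^ (-(t*p)))) ∂ν := by
              rw [← lintegral_const_mul' _ _ (hcne y)]
              exact lintegral_congr fun x => by ring
          _ ≤ (ρ y * ENNReal.ofReal (y ^ (t*p)) * g y ^ p) *
                (C₂ * ENNReal.ofReal (y ^ (-(t*p)))) := by
              refine mul_le_mul_right ?_ _
              have ecng : ∫⁻ x, Kk d₁ x y * (ρ x * ENNReal.ofReal (x ^ (-(t*p)))) ∂ν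
                  = ∫⁻ x, Kk d₁ x y * ENNReal.ofReal (x ^ (d₁ - 1 - t*p)) ∂ν := by
                refine lintegral_congr_ae ?_
                filter_upwards [ae_restrict_mem measurableSet_Ici] with x hx
                have hx0 : (0:ℝ) < x := lt_of_lt_of_le one_pos hx
                rw [hρ, ← ENNReal.ofReal_mul (by positivity), ← Real.rpow_add hx0,
                  show d₁ - 1 + -(t*p) = d₁ - 1 - t*p from by ring]
              rw [ecng, hC₂]
              exact schurB hb0 hb1 hy
          _ = C₂ * (ρ y * g y ^ p) *
                (ENNReal.ofReal (y ^ (t*p)) * ENNReal.ofReal (y ^ (-(t*p)))) := by ring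
          _ = C₂ * (ρ y * g y ^ p) := by
              rw [← ENNReal.ofReal_mul (by positivity), ← Real.rpow_add hy0,
                add_neg_cancel, Real.rpow_zero, ENNReal.ofReal_one, mul_one]
    _ = C₁ ^ (p/p') * C₂ * ∫⁻ x, g x ^ p ∂(mu d₁) := by
        rw [lintegral_const_mul' _ _ ENNReal.ofReal_ne_top, hmu,
          lintegral_withDensity_eq_lintegral_mul_non_measurable ν hρm hρtop, mul_assoc]
        simp only [Pi.mul_apply]
        rfl
end core

/-- For `1 < d₁ < 2`, the integral operator with kernel
`K(x,y) = x^{1-d₁} y^{-1}` for `x ≤ y` and `x^{-d₁}` for `x > y`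
is bounded on `L^p([1,∞), μ_{d₁})` for `1 < p < d₁' = d₁/(d₁-1)`. -/
theorem III1_Lp_bounded
    (d₁ p : ℝ) (hd₁ : 1 < d₁) (hd₁2 : d₁ < 2)
    (hp1 : 1 < p) (hp2 : p < d₁ / (d₁ - 1)) :
    ∃ C > 0, ∀ f : ℝ → ℝ, MemLp f (ENNReal.ofReal p) (mu d₁) →
      eLpNorm (fun x => ∫ y in Ici (1 : ℝ),
          (if x ≤ y then x ^ (1 - d₁) * y ^ (-1 : ℝ) else x ^ (-d₁)) * f y * y ^ (d₁ - 1))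
        (ENNReal.ofReal p) (mu d₁) ≤
      ENNReal.ofReal C * eLpNorm f (ENNReal.ofReal p) (mu d₁) := by
  have ppos : 0 < p := by linarith
  set p' := Real.conjExponent p with hp'def
  have hpq' : p.HolderConjugate p' := Real.HolderConjugate.conjExponent hp1
  have hpq : p'.HolderConjugate p := hpq'.symm
  have hp'1 : 1 < p' := hpq.lt
  have p'pos : 0 < p' := by linarith
  have hd0 : (0:ℝ) < d₁ - 1 := by linarith
  have hkey : (d₁ - 1) * (p - 1) < 1 := by
    have h := (lt_div_iff₀ hd0).1 hp2
    nlinarith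
  have hLM1 : (d₁-1)/p' < 1/p := by
    rw [div_lt_div_iff₀ p'pos ppos, hp'def, Real.conjExponent, one_mul,
      lt_div_iff₀ (by linarith : (0:ℝ) < p - 1)]
    nlinarith [mul_lt_mul_of_pos_left hkey ppos]
  have hLM : (d₁-1)/p' < min (1/p) (d₁/p') :=
    lt_min hLM1 ((div_lt_div_iff_of_pos_right p'pos).2 (by linarith))
  set t := ((d₁-1)/p' + min (1/p) (d₁/p'))/2 with htdef
  have htL : (d₁-1)/p' < t := by rw [htdef]; linarith
  have htM : t < min (1/p) (d₁/p') := by rw [htdef]; linarith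
  have ht : 0 < t := by
    have := div_pos hd0 p'pos; linarith
  have ha1 : d₁ - 1 < t * p' := by
    have := (div_lt_iff₀ p'pos).1 htL; linarith
  have ha2 : t * p' < d₁ := by
    have h1 : t < d₁/p' := lt_of_lt_of_le htM (min_le_right _ _)
    have := (lt_div_iff₀ p'pos).1 h1; linarith
  have hb1 : t * p < 1 := by
    have h1 : t < 1/p := lt_of_lt_of_le htM (min_le_left _ _)
    have := (lt_div_iff₀ ppos).1 h1; linarith
  have hb0 : 0 < t * p := mul_pos ht ppos
  set C₁r : ℝ := 1/(d₁ - t*p') + 1/(t*p' + 1 - d₁) with hC₁r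
  set C₂r : ℝ := 1/(1 - t*p) + 1/(t*p) with hC₂r
  have hC₁pos : 0 < C₁r := by
    have h1 : (0:ℝ) < d₁ - t*p' := by linarith
    have h2 : (0:ℝ) < t*p' + 1 - d₁ := by linarith
    positivity
  have hC₂pos : 0 < C₂r := by
    have h1 : (0:ℝ) < 1 - t*p := by linarith
    positivity
  refine ⟨(C₁r ^ (p/p') * C₂r) ^ (1/p), by positivity, ?_⟩
  intro f hfmem
  -- absolute continuity
  have hνmu : volume.restrict (Ici (1:ℝ)) ≪ mu d₁ := by
    refine Measure.AbsolutelyContinuous.mk fun s hs h0 => ?_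
    rw [mu, withDensity_apply _ hs] at h0
    have hle : volume.restrict (Ici (1:ℝ)) s ≤
        ∫⁻ x in s, ENNReal.ofReal (x ^ (d₁-1)) ∂(volume.restrict (Ici (1:ℝ))) := by
      rw [← setLIntegral_one]
      refine lintegral_mono_ae ?_
      have h1 : ∀ᵐ (x:ℝ) ∂(volume.restrict (Ici (1:ℝ))), x ∈ Ici (1:ℝ) :=
        ae_restrict_mem measurableSet_Ici
      filter_upwards [Filter.Eventually.filter_mono (ae_mono Measure.restrict_le_self) h1]
        with x hx
      refine ENNReal.one_le_ofReal.2 ?_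
      calc (1:ℝ) = x ^ (0:ℝ) := (Real.rpow_zero x).symm
        _ ≤ x ^ (d₁-1) := Real.rpow_le_rpow_of_exponent_le hx (by linarith)
    exact le_antisymm (hle.trans h0.le) (by simp)
  have hsm : AEStronglyMeasurable f (mu d₁) := hfmem.1
  set f' := hsm.mk f with hf'def
  have hf'm : Measurable f' := hsm.stronglyMeasurable_mk.measurable
  have hff'mu : f =ᵐ[mu d₁] f' := hsm.ae_eq_mk
  have hff'ν : f =ᵐ[volume.restrict (Ici (1:ℝ))] f' := hνmu.ae_eq hff'mu
  have hTeq : (fun x => ∫ y in Ici (1:ℝ),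
      (if x ≤ y then x ^ (1 - d₁) * y ^ (-1 : ℝ) else x ^ (-d₁)) * f y * y ^ (d₁ - 1)) =
      fun x => ∫ y in Ici (1:ℝ),
      (if x ≤ y then x ^ (1 - d₁) * y ^ (-1 : ℝ) else x ^ (-d₁)) * f' y * y ^ (d₁ - 1) := by
    funext x
    refine integral_congr_ae ?_
    filter_upwards [hff'ν] with y hy
    rw [hy]
  have hP0 : (ENNReal.ofReal p) ≠ 0 := ne_of_gt (ENNReal.ofReal_pos.2 ppos)
  have hPtop : (ENNReal.ofReal p) ≠ ⊤ := ENNReal.ofReal_ne_top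
  rw [hTeq, eLpNorm_congr_ae hff'mu, eLpNorm_eq_lintegral_rpow_enorm_toReal hP0 hPtop,
    eLpNorm_eq_lintegral_rpow_enorm_toReal hP0 hPtop, ENNReal.toReal_ofReal ppos.le]
  have hcore := core hd₁ hpq ht ha1 ha2 hb0 hb1 f' hf'm
  calc (∫⁻ x, (‖∫ y in Ici (1:ℝ),
        (if x ≤ y then x ^ (1 - d₁) * y ^ (-1 : ℝ) else x ^ (-d₁)) * f' y * y ^ (d₁ - 1)‖₊
        : ℝ≥0∞) ^ p ∂(mu d₁)) ^ (1/p)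
      ≤ (ENNReal.ofReal C₁r ^ (p/p') * ENNReal.ofReal C₂r *
          ∫⁻ x, (‖f' x‖₊ : ℝ≥0∞) ^ p ∂(mu d₁)) ^ (1/p) :=
        ENNReal.rpow_le_rpow hcore (by positivity)
    _ = ENNReal.ofReal ((C₁r ^ (p/p') * C₂r) ^ (1/p)) *
          (∫⁻ x, (‖f' x‖₊ : ℝ≥0∞) ^ p ∂(mu d₁)) ^ (1/p) := by
        rw [ENNReal.mul_rpow_of_nonneg _ _ (by positivity : (0:ℝ) ≤ 1/p),
          ENNReal.ofReal_rpow_of_pos hC₁pos, ← ENNReal.ofReal_mul (by positivity),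
          ENNReal.ofReal_rpow_of_pos (by positivity)]
end

section
/- Let n > 1, 0 < β < n, and 1 < p ≤ n/(n−β). Then there exists a constant C > 0 such that for every measurable set E ⊆ [1,∞) of finite μ_n-measure, ∫_E y^{−β} y^{n−1} dy ≤ C μ_n(E)^{1/p}. -/
open MeasureTheory Set

/-- For `n > 1`, `0 < β < n` and `1 < p ≤ n/(n-β)`, there is `C > 0` such that for every
measurable `E ⊆ [1,∞)` of finite `μ_n`-measure, `∫_E y^{-β} y^{n-1} dy ≤ C μ_n(E)^{1/p}`. -/
theorem integral_le_measure_rpow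
    (n β p : ℝ) (hn : 1 < n) (hβ0 : 0 < β) (hβn : β < n)
    (hp1 : 1 < p) (hp2 : p ≤ n / (n - β)) :
    ∃ C > 0, ∀ E : Set ℝ, MeasurableSet E → E ⊆ Ici (1 : ℝ) → mu n E < ⊤ →
      ∫⁻ y in E, ENNReal.ofReal (y ^ (-β) * y ^ (n - 1)) ≤
        ENNReal.ofReal C * (mu n E) ^ (1 / p) := by
  have hnβ : 0 < n - β := by linarith
  have hn0 : 0 < n := by linarith
  have hp0 : 0 < p := by linarith
  set C : ℝ := 1 / (n - β) + 1 with hC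
  have hC1 : (1 : ℝ) ≤ C := by
    rw [hC]
    have : (0:ℝ) < 1 / (n - β) := by positivity
    linarith
  have hCpos : 0 < C := lt_of_lt_of_le one_pos hC1
  have hpn : p * (n - β) ≤ n := (le_div_iff₀ hnβ).mp hp2
  have hexp : (n - β) / n ≤ 1 / p := by
    rw [div_le_div_iff₀ hn0 hp0]
    nlinarith
  refine ⟨C, hCpos, ?_⟩
  intro E hE hEsub hEfin
  have hmuE : mu n E = ∫⁻ y in E, ENNReal.ofReal (y ^ (n - 1)) := by
    rw [mu, withDensity_apply _ hE, Measure.restrict_restrict hE,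
      inter_eq_self_of_subset_left hEsub]
  have hofC : (1 : ENNReal) ≤ ENNReal.ofReal C := by
    rw [← ENNReal.ofReal_one]
    exact ENNReal.ofReal_le_ofReal hC1
  by_cases hm1 : mu n E ≤ 1
  · -- small measure case
    have h1 : ∫⁻ y in E, ENNReal.ofReal (y ^ (-β) * y ^ (n - 1)) ≤ mu n E := by
      rw [hmuE]
      refine setLIntegral_mono' hE fun y hy => ?_
      have hy1 : (1:ℝ) ≤ y := hEsub hy
      have : y ^ (-β) * y ^ (n-1) ≤ 1 * y ^ (n-1) := by
        apply mul_le_mul_of_nonneg_right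
        · exact Real.rpow_le_one_of_one_le_of_nonpos hy1 (by linarith)
        · exact Real.rpow_nonneg (by linarith) _
      exact ENNReal.ofReal_le_ofReal (by linarith)
    calc ∫⁻ y in E, ENNReal.ofReal (y ^ (-β) * y ^ (n - 1)) ≤ mu n E := h1
      _ = (mu n E) ^ (1:ℝ) := (ENNReal.rpow_one _).symm
      _ ≤ (mu n E) ^ (1/p) := ENNReal.rpow_le_rpow_of_exponent_ge hm1
            (by rw [div_le_one hp0]; linarith)
      _ ≤ ENNReal.ofReal C * (mu n E) ^ (1/p) := le_mul_of_one_le_left zero_le hofC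
  · push_neg at hm1
    set t : ℝ := (mu n E).toReal with ht
    have ht1 : 1 < t := by
      have h := (ENNReal.toReal_lt_toReal ENNReal.one_ne_top hEfin.ne).mpr hm1
      simpa using h
    have ht0 : 0 < t := by linarith
    set R : ℝ := t ^ (1/n) with hR
    have hR1 : 1 < R := by
      rw [hR, Real.one_lt_rpow_iff_of_pos ht0]
      exact Or.inl ⟨ht1, by positivity⟩
    have hR0 : 0 < R := by linarith
    have hsplit : E = (E ∩ Icc 1 R) ∪ (E ∩ Ioi R) := by
      rw [← inter_union_distrib_left, eq_comm, inter_eq_left]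
      intro x hx
      rcases le_or_gt x R with h | h
      · exact Or.inl ⟨hEsub hx, h⟩
      · exact Or.inr h
    have hdisj : Disjoint (E ∩ Icc 1 R) (E ∩ Ioi R) :=
      (Set.Iic_disjoint_Ioi le_rfl).mono (inter_subset_right.trans Icc_subset_Iic_self)
        inter_subset_right
    -- term A
    have hA : ∫⁻ y in E ∩ Icc 1 R, ENNReal.ofReal (y ^ (-β) * y ^ (n - 1)) ≤
        ENNReal.ofReal (R ^ (n - β) / (n - β)) := by
      have hcong : ∫⁻ y in Icc 1 R, ENNReal.ofReal (y ^ (-β) * y ^ (n - 1)) =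
          ∫⁻ y in Icc 1 R, ENNReal.ofReal (y ^ (n - 1 - β)) := by
        refine setLIntegral_congr_fun measurableSet_Icc (fun y hy => ?_)
        have hy0 : (0:ℝ) < y := by linarith [hy.1]
        rw [← Real.rpow_add hy0]
        ring_nf
      have hcont : ContinuousOn (fun y : ℝ => y ^ (n - 1 - β)) (Icc 1 R) := by
        apply ContinuousOn.rpow_const continuousOn_id
        intro x hx
        refine Or.inl fun h => ?_
        simp only [id_eq] at h
        rw [h] at hx
        exact absurd hx.1 (by norm_num)
      have hint : IntegrableOn (fun y : ℝ => y ^ (n - 1 - β)) (Icc 1 R) :=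
        hcont.integrableOn_Icc
      have hval : ∫ y in Icc 1 R, y ^ (n - 1 - β) = (R ^ (n - β) - 1) / (n - β) := by
        rw [integral_Icc_eq_integral_Ioc, ← intervalIntegral.integral_of_le hR1.le,
          integral_rpow (Or.inl (by linarith))]
        have h1 : n - 1 - β + 1 = n - β := by ring
        rw [h1, Real.one_rpow]
      calc ∫⁻ y in E ∩ Icc 1 R, ENNReal.ofReal (y ^ (-β) * y ^ (n - 1))
          ≤ ∫⁻ y in Icc 1 R, ENNReal.ofReal (y ^ (-β) * y ^ (n - 1)) :=
            lintegral_mono_set inter_subset_right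
        _ = ∫⁻ y in Icc 1 R, ENNReal.ofReal (y ^ (n - 1 - β)) := hcong
        _ = ENNReal.ofReal (∫ y in Icc 1 R, y ^ (n - 1 - β)) := by
            rw [← ofReal_integral_eq_lintegral_ofReal hint]
            refine (ae_restrict_iff' measurableSet_Icc).mpr (ae_of_all _ fun y hy => ?_)
            exact Real.rpow_nonneg (by linarith [hy.1]) _
        _ ≤ ENNReal.ofReal (R ^ (n - β) / (n - β)) := by
            apply ENNReal.ofReal_le_ofReal
            rw [hval]
            gcongr
            linarith
    -- term B
    have hB : ∫⁻ y in E ∩ Ioi R, ENNReal.ofReal (y ^ (-β) * y ^ (n - 1)) ≤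
        ENNReal.ofReal (R ^ (-β)) * mu n E := by
      have step : ∫⁻ y in E ∩ Ioi R, ENNReal.ofReal (y ^ (-β) * y ^ (n - 1)) ≤
          ∫⁻ y in E ∩ Ioi R, ENNReal.ofReal (R ^ (-β)) * ENNReal.ofReal (y ^ (n - 1)) := by
        refine setLIntegral_mono' (hE.inter measurableSet_Ioi) fun y hy => ?_
        have hyR : R < y := hy.2
        have hy0 : (0:ℝ) < y := by linarith
        rw [ENNReal.ofReal_mul (Real.rpow_nonneg hy0.le _)]
        apply mul_le_mul_left
        exact ENNReal.ofReal_le_ofReal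
          (Real.rpow_le_rpow_of_nonpos hR0 hyR.le (by linarith))
      have step2 : ∫⁻ y in E ∩ Ioi R, ENNReal.ofReal (R ^ (-β)) * ENNReal.ofReal (y ^ (n - 1))
          = ENNReal.ofReal (R ^ (-β)) * ∫⁻ y in E ∩ Ioi R, ENNReal.ofReal (y ^ (n - 1)) :=
        lintegral_const_mul' _ _ ENNReal.ofReal_ne_top
      have step3 : ∫⁻ y in E ∩ Ioi R, ENNReal.ofReal (y ^ (n - 1)) ≤ mu n E := by
        rw [hmuE]
        exact lintegral_mono_set inter_subset_left
      calc _ ≤ _ := step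
        _ = _ := step2
        _ ≤ ENNReal.ofReal (R ^ (-β)) * mu n E := mul_le_mul_right step3 _
    -- combine
    have hmuof : mu n E = ENNReal.ofReal t := (ENNReal.ofReal_toReal hEfin.ne).symm
    have hRval : R ^ (n - β) = t ^ ((n - β) / n) := by
      rw [hR, ← Real.rpow_mul ht0.le]
      congr 1
      field_simp
    have hRt : R ^ (-β) * t = t ^ ((n - β) / n) := by
      have h : (n - β) / n = 1 / n * (-β) + 1 := by field_simp; ring
      rw [hR, ← Real.rpow_mul ht0.le, h, Real.rpow_add ht0, Real.rpow_one]
    calc ∫⁻ y in E, ENNReal.ofReal (y ^ (-β) * y ^ (n - 1))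
        = (∫⁻ y in E ∩ Icc 1 R, ENNReal.ofReal (y ^ (-β) * y ^ (n - 1)))
          + ∫⁻ y in E ∩ Ioi R, ENNReal.ofReal (y ^ (-β) * y ^ (n - 1)) := by
          conv_lhs => rw [hsplit]
          exact lintegral_union (hE.inter measurableSet_Ioi) hdisj
      _ ≤ ENNReal.ofReal (R ^ (n - β) / (n - β)) + ENNReal.ofReal (R ^ (-β)) * mu n E :=
          add_le_add hA hB
      _ = ENNReal.ofReal (R ^ (n - β) / (n - β) + R ^ (-β) * t) := by
          rw [hmuof, ← ENNReal.ofReal_mul (Real.rpow_nonneg hR0.le _),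
            ← ENNReal.ofReal_add (div_nonneg (Real.rpow_nonneg hR0.le _) hnβ.le)
              (mul_nonneg (Real.rpow_nonneg hR0.le _) ht0.le)]
      _ = ENNReal.ofReal (C * t ^ ((n - β) / n)) := by
          rw [hRval, hRt]
          congr 1
          rw [hC]
          ring
      _ = ENNReal.ofReal C * ENNReal.ofReal (t ^ ((n - β) / n)) := ENNReal.ofReal_mul hCpos.le
      _ = ENNReal.ofReal C * (mu n E) ^ ((n - β) / n) := by
          rw [hmuof, ENNReal.ofReal_rpow_of_pos ht0]
      _ ≤ ENNReal.ofReal C * (mu n E) ^ (1 / p) :=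
          mul_le_mul_right (ENNReal.rpow_le_rpow_of_exponent_le hm1.le hexp) _
end

section
/- Let 1 < d₁ < 2 < d₂ and set p₀ = d₁' = d₁/(d₁−1). Consider the operator T χ_E(x) = ∫₁^∞ K(x,y) χ_E(y) y^{d₁−1} dy with kernel K(x,y) = x^{1−d₂} y^{−1} for 1 ≤ x ≤ y and K(x,y) = x^{−d₂} for x > y ≥ 1. Then there exists a constant C > 0 such that for every measurable set E ⊆ [1,∞) with μ_{d₁}(E) < ∞ and every s > 0, μ_{d₂}({x ∈ [1,∞) : Tχ_E(x) > s}) ≤ (C μ_{d₁}(E)^{1/p₀} / s)^{p₀}. (That is, T is of restricted weak type (p₀, p₀) from ([1,∞), μ_{d₁}) to ([1,∞), μ_{d₂}).) -/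
open MeasureTheory Set

open Real in
lemma mu_apply_aux (n : ℝ) {S : Set ℝ} (hS : MeasurableSet S) (hS1 : S ⊆ Ici (1:ℝ)) :
    mu n S = ∫⁻ x in S, ENNReal.ofReal (x ^ (n - 1)) := by
  rw [mu, withDensity_apply _ hS, Measure.restrict_restrict hS, inter_eq_left.mpr hS1]

open Real in
lemma integrableOn_of_mu_lt_top_aux {n : ℝ} {E : Set ℝ} (hE : MeasurableSet E)
    (hE1 : E ⊆ Ici (1:ℝ)) (hfin : mu n E < ⊤) :
    IntegrableOn (fun y => y ^ (n - 1)) E := by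
  constructor
  · exact (by fun_prop : Measurable fun y : ℝ => y ^ (n-1)).aestronglyMeasurable
  · rw [hasFiniteIntegral_iff_norm]
    have : ∀ᵐ y ∂(volume.restrict E), ENNReal.ofReal ‖y ^ (n-1)‖ = ENNReal.ofReal (y ^ (n-1)) := by
      filter_upwards [ae_restrict_mem hE] with y hy
      rw [Real.norm_eq_abs, abs_of_nonneg (rpow_nonneg (le_trans zero_le_one (hE1 hy)) _)]
    rw [lintegral_congr_ae this, ← mu_apply_aux n hE hE1]
    exact hfin

open Real in
lemma integral_eq_mu_aux {n : ℝ} {E : Set ℝ} (hE : MeasurableSet E)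
    (hE1 : E ⊆ Ici (1:ℝ)) (hfin : mu n E < ⊤) :
    ENNReal.ofReal (∫ y in E, y ^ (n - 1)) = mu n E := by
  rw [ofReal_integral_eq_lintegral_ofReal (integrableOn_of_mu_lt_top_aux hE hE1 hfin)
    (by filter_upwards [ae_restrict_mem hE] with y hy
        exact rpow_nonneg (le_trans zero_le_one (hE1 hy)) _),
    mu_apply_aux n hE hE1]

open Real in
lemma integrableOn_two_aux {d₁ : ℝ} (hd₁ : 1 < d₁) {E : Set ℝ} (hE : MeasurableSet E)
    (hE1 : E ⊆ Ici (1:ℝ)) (hint : IntegrableOn (fun y => y ^ (d₁ - 1)) E) :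
    IntegrableOn (fun y => y ^ (d₁ - 2)) E := by
  refine hint.mono' ((by fun_prop : Measurable fun y : ℝ => y ^ (d₁-2)).aestronglyMeasurable) ?_
  filter_upwards [ae_restrict_mem hE] with y hy
  rw [Real.norm_eq_abs, abs_of_nonneg (rpow_nonneg (le_trans zero_le_one (hE1 hy)) _)]
  exact rpow_le_rpow_of_exponent_le (hE1 hy) (by linarith)

open Real in
lemma key_aux {d₁ : ℝ} (hd₁ : 1 < d₁) (hd₁2 : d₁ < 2) {E : Set ℝ}
    (hE : MeasurableSet E) (hE1 : E ⊆ Ici (1:ℝ))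
    (hint : IntegrableOn (fun y => y ^ (d₁ - 1)) E) :
    ∫ y in E, y ^ (d₁ - 2) ≤ d₁ / (d₁ - 1) * (∫ y in E, y ^ (d₁ - 1)) ^ ((d₁ - 1) / d₁) := by
  have hd₁1 : 0 < d₁ - 1 := by linarith
  set m := ∫ y in E, y ^ (d₁ - 1) with hm
  have hmono : ∀ y ∈ E, y ^ (d₁ - 2) ≤ y ^ (d₁ - 1) := fun y hy =>
    rpow_le_rpow_of_exponent_le (hE1 hy) (by linarith)
  have hint2 : IntegrableOn (fun y => y ^ (d₁ - 2)) E := integrableOn_two_aux hd₁ hE hE1 hint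
  have hAm : ∫ y in E, y ^ (d₁ - 2) ≤ m := setIntegral_mono_on hint2 hint hE hmono
  have hm0 : 0 ≤ m := setIntegral_nonneg hE fun y hy =>
    rpow_nonneg (le_trans zero_le_one (hE1 hy)) _
  have hC1 : 1 ≤ d₁ / (d₁ - 1) := by rw [le_div_iff₀ hd₁1]; linarith
  have hθ : 0 < (d₁ - 1) / d₁ := by positivity
  rcases le_or_gt m 1 with h1 | h1
  · rcases eq_or_lt_of_le hm0 with h0 | h0
    · calc ∫ y in E, y ^ (d₁ - 2) ≤ 0 := le_trans hAm h0.symm.le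
        _ ≤ _ := by positivity
    · have hrp : m ≤ m ^ ((d₁ - 1) / d₁) := by
        nth_rewrite 1 [← Real.rpow_one m]
        exact Real.rpow_le_rpow_of_exponent_ge h0 h1 (by rw [div_le_one (by linarith)]; linarith)
      calc ∫ y in E, y ^ (d₁ - 2) ≤ m := hAm
        _ ≤ m ^ ((d₁ - 1) / d₁) := hrp
        _ ≤ d₁ / (d₁ - 1) * m ^ ((d₁ - 1) / d₁) := le_mul_of_one_le_left (by positivity) hC1
  · set b := m ^ (1 / d₁) with hb
    have hb1 : 1 < b := (Real.one_lt_rpow_iff_of_pos (by linarith)).mpr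
      (Or.inl ⟨h1, by positivity⟩)
    have hb0 : 0 < b := by linarith
    have hunion : E ∩ Iio b ∪ E ∩ Ici b = E := by
      rw [← inter_union_distrib_left, Iio_union_Ici, inter_univ]
    have hsplit : ∫ y in E, y ^ (d₁ - 2)
        = (∫ y in E ∩ Iio b, y ^ (d₁ - 2)) + ∫ y in E ∩ Ici b, y ^ (d₁ - 2) := by
      rw [← setIntegral_union (Disjoint.mono inter_subset_right inter_subset_right
          (Iio_disjoint_Ici le_rfl)) (hE.inter measurableSet_Ici)
          (hint2.mono_set inter_subset_left) (hint2.mono_set inter_subset_left), hunion]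
    have hIco : IntegrableOn (fun y => y ^ (d₁ - 2)) (Ico 1 b) := by
      apply (ContinuousOn.integrableOn_Icc ?_).mono_set Ico_subset_Icc_self
      exact fun x hx => (continuousAt_rpow_const x _
        (Or.inl (by rw [mem_Icc] at hx; nlinarith [hx.1]))).continuousWithinAt
    have h1b : (∫ y in E ∩ Iio b, y ^ (d₁ - 2)) ≤ ∫ y in Ico 1 b, y ^ (d₁ - 2) := by
      apply setIntegral_mono_set hIco
      · filter_upwards [ae_restrict_mem measurableSet_Ico] with y hy
        exact rpow_nonneg (le_trans zero_le_one hy.1) _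
      · exact HasSubset.Subset.eventuallyLE fun y hy => ⟨hE1 hy.1, hy.2⟩
    have hIcoval : ∫ y in Ico 1 b, y ^ (d₁ - 2) = (b ^ (d₁ - 1) - 1) / (d₁ - 1) := by
      rw [setIntegral_congr_set Ico_ae_eq_Ioc, ← intervalIntegral.integral_of_le hb1.le,
        integral_rpow (Or.inl (by linarith))]
      have h21 : d₁ - 2 + 1 = d₁ - 1 := by ring
      rw [h21, Real.one_rpow]
    have h2b : (∫ y in E ∩ Ici b, y ^ (d₁ - 2)) ≤ m / b := by
      have step1 : (∫ y in E ∩ Ici b, y ^ (d₁ - 2)) ≤ ∫ y in E ∩ Ici b, y ^ (d₁ - 1) / b := by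
        apply setIntegral_mono_on (hint2.mono_set inter_subset_left)
          ((hint.mono_set inter_subset_left).div_const b) (hE.inter measurableSet_Ici)
        intro y hy
        have hy1 : (1:ℝ) ≤ y := hE1 hy.1
        have hyb : b ≤ y := hy.2
        have hrw : y ^ (d₁ - 2) = y ^ (d₁ - 1) / y := by
          rw [show d₁ - 2 = (d₁ - 1) - 1 by ring, Real.rpow_sub (by linarith), Real.rpow_one]
        rw [hrw]
        gcongr
      have hsub : (∫ y in E ∩ Ici b, y ^ (d₁ - 1)) ≤ m := by
        apply setIntegral_mono_set hint
        · filter_upwards [ae_restrict_mem hE] with y hy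
          exact rpow_nonneg (le_trans zero_le_one (hE1 hy)) _
        · exact HasSubset.Subset.eventuallyLE inter_subset_left
      rw [integral_div] at step1
      calc (∫ y in E ∩ Ici b, y ^ (d₁ - 2)) ≤ (∫ y in E ∩ Ici b, y ^ (d₁ - 1)) / b := step1
        _ ≤ m / b := by gcongr
    have hbp : b ^ (d₁ - 1) = m ^ ((d₁ - 1) / d₁) := by
      rw [hb, ← Real.rpow_mul hm0]
      congr 1
      field_simp
    have hmb : m / b = m ^ ((d₁ - 1) / d₁) := by
      rw [hb]
      nth_rewrite 1 [← Real.rpow_one m]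
      rw [← Real.rpow_sub (by linarith)]
      congr 1
      field_simp
    have hdiff : d₁ / (d₁ - 1) * m ^ ((d₁ - 1) / d₁)
        - ((m ^ ((d₁ - 1) / d₁) - 1) / (d₁ - 1) + m ^ ((d₁ - 1) / d₁)) = 1 / (d₁ - 1) := by
      field_simp
      ring
    have h1d : 0 < 1 / (d₁ - 1) := by positivity
    calc ∫ y in E, y ^ (d₁ - 2)
        = (∫ y in E ∩ Iio b, y ^ (d₁ - 2)) + ∫ y in E ∩ Ici b, y ^ (d₁ - 2) := hsplit
      _ ≤ (b ^ (d₁ - 1) - 1) / (d₁ - 1) + m / b := by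
          have := h1b
          rw [hIcoval] at this
          linarith
      _ = (m ^ ((d₁ - 1) / d₁) - 1) / (d₁ - 1) + m ^ ((d₁ - 1) / d₁) := by rw [hbp, hmb]
      _ ≤ d₁ / (d₁ - 1) * m ^ ((d₁ - 1) / d₁) := by linarith

open Real in
lemma pointwise_bound_aux {d₁ d₂ : ℝ} {E : Set ℝ}
    (hE : MeasurableSet E) (hE1 : E ⊆ Ici (1:ℝ))
    (hint2 : IntegrableOn (fun y => y ^ (d₁ - 2)) E) {x : ℝ} (hx : 1 ≤ x) :
    (∫ y in E, (if x ≤ y then x ^ (1 - d₂) * y ^ (-1 : ℝ) else x ^ (-d₂)) * y ^ (d₁ - 1))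
      ≤ (∫ y in E, y ^ (d₁ - 2)) * x ^ (1 - d₂) := by
  have hx0 : (0:ℝ) < x := by linarith
  have hg : IntegrableOn (fun y => x ^ (1 - d₂) * y ^ (d₁ - 2)) E := hint2.const_mul _
  have hle : (∫ y in E, (if x ≤ y then x ^ (1 - d₂) * y ^ (-1 : ℝ) else x ^ (-d₂)) * y ^ (d₁ - 1))
      ≤ ∫ y in E, x ^ (1 - d₂) * y ^ (d₁ - 2) := by
    apply integral_mono_of_nonneg
    · filter_upwards [ae_restrict_mem hE] with y hy
      have hy0 : (0:ℝ) ≤ y := le_trans zero_le_one (hE1 hy)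
      have h1 : (0:ℝ) ≤ x ^ (1 - d₂) := rpow_nonneg hx0.le _
      have h2 : (0:ℝ) ≤ x ^ (-d₂) := rpow_nonneg hx0.le _
      have h3 : (0:ℝ) ≤ y ^ (-1:ℝ) := rpow_nonneg hy0 _
      have h4 : (0:ℝ) ≤ y ^ (d₁ - 1) := rpow_nonneg hy0 _
      split_ifs <;> positivity
    · exact hg
    · filter_upwards [ae_restrict_mem hE] with y hy
      have hy1 : (1:ℝ) ≤ y := hE1 hy
      have hy0 : (0:ℝ) < y := by linarith
      split_ifs with hxy
      · rw [mul_assoc, ← Real.rpow_add hy0, show (-1) + (d₁ - 1) = d₁ - 2 by ring]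
      · have hyx : y ≤ x := (lt_of_not_ge hxy).le
        have e1 : y ^ (d₁ - 1) = y ^ (d₁ - 2) * y := by
          rw [show d₁ - 1 = (d₁ - 2) + 1 by ring, Real.rpow_add hy0, Real.rpow_one]
        have e2 : x ^ (1 - d₂) = x ^ (-d₂) * x := by
          rw [show 1 - d₂ = (-d₂) + 1 by ring, Real.rpow_add hx0, Real.rpow_one]
        rw [e1, e2]
        have h2 : (0:ℝ) ≤ x ^ (-d₂) := rpow_nonneg hx0.le _
        have h3 : (0:ℝ) ≤ y ^ (d₁ - 2) := rpow_nonneg hy0.le _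
        nlinarith [mul_nonneg (mul_nonneg h2 h3) (sub_nonneg.mpr hyx)]
  rw [integral_const_mul] at hle
  linarith [hle]

/-- For `1 < d₁ < 2 < d₂` and `p₀ = d₁' = d₁/(d₁-1)`, the integral operator with kernel
`K(x,y) = x^{1-d₂} y^{-1}` for `x ≤ y` and `x^{-d₂}` for `x > y` is of restricted weak
type `(p₀,p₀)` from `([1,∞), μ_{d₁})` to `([1,∞), μ_{d₂})`. -/
theorem IV1_restricted_weak_type
    (d₁ d₂ p₀ : ℝ) (hd₁ : 1 < d₁) (hd₁2 : d₁ < 2) (hd₂ : 2 < d₂)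
    (hp₀ : p₀ = d₁ / (d₁ - 1)) :
    ∃ C > 0, ∀ E : Set ℝ, MeasurableSet E → E ⊆ Ici (1 : ℝ) → mu d₁ E < ⊤ →
      ∀ s > 0,
        mu d₂ {x | x ∈ Ici (1 : ℝ) ∧
            s < ∫ y in E, (if x ≤ y then x ^ (1 - d₂) * y ^ (-1 : ℝ) else x ^ (-d₂))
              * y ^ (d₁ - 1)} ≤
          (ENNReal.ofReal C * (mu d₁ E) ^ (1 / p₀) / ENNReal.ofReal s) ^ p₀ := by
  have hd₁1 : (0:ℝ) < d₁ - 1 := by linarith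
  have hd₂1 : (0:ℝ) < d₂ - 1 := by linarith
  have hC₁0 : (0:ℝ) < d₁ / (d₁ - 1) := by positivity
  refine ⟨d₁ / (d₁ - 1), hC₁0, ?_⟩
  intro E hE hE1 hEfin s hs
  have hp₀inv : 1 / p₀ = (d₁ - 1) / d₁ := by rw [hp₀, one_div_div]
  have hp₀pos : 0 < p₀ := by rw [hp₀]; positivity
  have hθ0 : (0:ℝ) ≤ (d₁ - 1) / d₁ := by positivity
  have hint : IntegrableOn (fun y => y ^ (d₁ - 1)) E :=
    integrableOn_of_mu_lt_top_aux hE hE1 hEfin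
  have hint2 : IntegrableOn (fun y => y ^ (d₁ - 2)) E := integrableOn_two_aux hd₁ hE hE1 hint
  set m := ∫ y in E, y ^ (d₁ - 1) with hm
  have hm0 : 0 ≤ m := setIntegral_nonneg hE fun y hy =>
    Real.rpow_nonneg (le_trans zero_le_one (hE1 hy)) _
  have hmval : ENNReal.ofReal m = mu d₁ E := integral_eq_mu_aux hE hE1 hEfin
  set c := d₁ / (d₁ - 1) * m ^ ((d₁ - 1) / d₁) with hc
  have hc0 : 0 ≤ c := by positivity
  have hu0 : 0 ≤ c / s := by positivity
  -- rewrite RHS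
  have hRHS : (ENNReal.ofReal (d₁ / (d₁ - 1)) * (mu d₁ E) ^ (1 / p₀) / ENNReal.ofReal s) ^ p₀
      = ENNReal.ofReal ((c / s) ^ p₀) := by
    rw [← hmval, hp₀inv, ENNReal.ofReal_rpow_of_nonneg hm0 hθ0,
      ← ENNReal.ofReal_mul hC₁0.le, ← hc, ← ENNReal.ofReal_div_of_pos hs,
      ENNReal.ofReal_rpow_of_nonneg hu0 hp₀pos.le]
  rw [hRHS]
  -- pointwise bound
  have hpt : ∀ x : ℝ, 1 ≤ x →
      (∫ y in E, (if x ≤ y then x ^ (1 - d₂) * y ^ (-1 : ℝ) else x ^ (-d₂)) * y ^ (d₁ - 1))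
        ≤ c * x ^ (1 - d₂) := by
    intro x hx
    have h1 := pointwise_bound_aux (d₁ := d₁) (d₂ := d₂) hE hE1 hint2 hx
    have h2 := key_aux hd₁ hd₁2 hE hE1 hint
    have hxp : (0:ℝ) ≤ x ^ (1 - d₂) := Real.rpow_nonneg (by linarith) _
    calc (∫ y in E, (if x ≤ y then x ^ (1 - d₂) * y ^ (-1 : ℝ) else x ^ (-d₂)) * y ^ (d₁ - 1))
        ≤ (∫ y in E, y ^ (d₁ - 2)) * x ^ (1 - d₂) := h1
      _ ≤ c * x ^ (1 - d₂) := by rw [hc]; exact mul_le_mul_of_nonneg_right h2 hxp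
  rcases lt_or_ge (c / s) 1 with hu | hu
  · -- level set is empty
    have hempty : {x | x ∈ Ici (1:ℝ) ∧
        s < ∫ y in E, (if x ≤ y then x ^ (1 - d₂) * y ^ (-1 : ℝ) else x ^ (-d₂))
          * y ^ (d₁ - 1)} = ∅ := by
      rw [eq_empty_iff_forall_notMem]
      rintro x ⟨hx1, hxs⟩
      have hx1' : (1:ℝ) ≤ x := hx1
      have hxp : x ^ (1 - d₂) ≤ 1 :=
        Real.rpow_le_one_of_one_le_of_nonpos hx1' (by linarith)
      have : s < c := by
        calc s < _ := hxs
          _ ≤ c * x ^ (1 - d₂) := hpt x hx1'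
          _ ≤ c * 1 := mul_le_mul_of_nonneg_left hxp hc0
          _ = c := mul_one c
      have : 1 < c / s := (one_lt_div hs).mpr this
      linarith
    rw [hempty]
    simp only [measure_empty]
    exact zero_le
  · -- u ≥ 1
    set R := (c / s) ^ (1 / (d₂ - 1)) with hR
    have hR1 : 1 ≤ R := Real.one_le_rpow hu (by positivity)
    have hR0 : (0:ℝ) < R := by linarith
    have hsubset : {x | x ∈ Ici (1:ℝ) ∧
        s < ∫ y in E, (if x ≤ y then x ^ (1 - d₂) * y ^ (-1 : ℝ) else x ^ (-d₂))
          * y ^ (d₁ - 1)} ⊆ Ico 1 R := by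
      rintro x ⟨hx1, hxs⟩
      have hx1' : (1:ℝ) ≤ x := hx1
      have hx0 : (0:ℝ) < x := by linarith
      have hxinv : x ^ (1 - d₂) = (x ^ (d₂ - 1))⁻¹ := by
        rw [← Real.rpow_neg hx0.le]
        congr 1
        ring
      have hXpos : (0:ℝ) < x ^ (d₂ - 1) := Real.rpow_pos_of_pos hx0 _
      have hlt : s < c / x ^ (d₂ - 1) := by
        have := lt_of_lt_of_le hxs (hpt x hx1')
        rw [hxinv] at this
        rw [div_eq_mul_inv]
        exact this
      have hXlt : x ^ (d₂ - 1) < c / s := by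
        rw [lt_div_iff₀ hs, mul_comm]
        rwa [lt_div_iff₀ hXpos] at hlt
      have hxR : x < R := by
        have h := Real.rpow_lt_rpow (Real.rpow_nonneg hx0.le _) hXlt
          (by positivity : (0:ℝ) < 1 / (d₂ - 1))
        rwa [← Real.rpow_mul hx0.le, mul_one_div, div_self (ne_of_gt hd₂1),
          Real.rpow_one] at h
      exact ⟨hx1', hxR⟩
    have hRd : R ^ d₂ ≤ (c / s) ^ p₀ := by
      rw [hR, ← Real.rpow_mul hu0]
      apply Real.rpow_le_rpow_of_exponent_le hu
      rw [hp₀, one_div_mul_eq_div, div_le_div_iff₀ hd₂1 hd₁1]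
      nlinarith
    calc mu d₂ {x | x ∈ Ici (1:ℝ) ∧
          s < ∫ y in E, (if x ≤ y then x ^ (1 - d₂) * y ^ (-1 : ℝ) else x ^ (-d₂))
            * y ^ (d₁ - 1)}
        ≤ mu d₂ (Ico 1 R) := measure_mono hsubset
      _ = ∫⁻ x in Ico 1 R, ENNReal.ofReal (x ^ (d₂ - 1)) :=
          mu_apply_aux d₂ measurableSet_Ico fun x hx => hx.1
      _ ≤ ∫⁻ _x in Ico 1 R, ENNReal.ofReal (R ^ (d₂ - 1)) := by
          apply setLIntegral_mono measurable_const
          intro x hx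
          exact ENNReal.ofReal_le_ofReal
            (Real.rpow_le_rpow (le_trans zero_le_one hx.1) hx.2.le hd₂1.le)
      _ = ENNReal.ofReal (R ^ (d₂ - 1)) * volume (Ico 1 R) := by
          rw [setLIntegral_const]
      _ ≤ ENNReal.ofReal (R ^ (d₂ - 1)) * ENNReal.ofReal R := by
          gcongr
          rw [Real.volume_Ico]
          exact ENNReal.ofReal_le_ofReal (by linarith)
      _ = ENNReal.ofReal (R ^ (d₂ - 1) * R) := by
          rw [← ENNReal.ofReal_mul (Real.rpow_nonneg hR0.le _)]
      _ = ENNReal.ofReal (R ^ d₂) := by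
          congr 1
          rw [show R ^ (d₂ - 1) * R = R ^ (d₂ - 1) * R ^ (1:ℝ) by rw [Real.rpow_one],
            ← Real.rpow_add hR0]
          norm_num
      _ ≤ ENNReal.ofReal ((c / s) ^ p₀) := ENNReal.ofReal_le_ofReal hRd
end
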